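/- arXiv:2206.03568 — 10 statements merged into one kernel-verified Lean document; each statement's English description precedes it below -/
import Mathlib

section
/- Let f : ℝⁿ → ℝⁿ and g : ℝⁿ → ℝⁿˣᵐ be continuous, h : ℝⁿ → ℝ be continuously differentiable, α be a locally Lipschitz extended class K∞ function, and k : ℝⁿ → ℝᵐ be a continuous controller satisfying L_f h(x) + L_g h(x) k(x) ≥ −α(h(x)) for all x ∈ ℝⁿ. Let x : [0,∞) → ℝⁿ be differentiable with ẋ(t) = f(x(t)) + g(x(t)) k(x(t)) for all t ≥ 0. If h(x(0)) ≥ 0, then h(x(t)) ≥ 0 for all t ≥ 0; that is, the 0-superlevel set C = {x : h(x) ≥ 0} is forward invariant for the closed-loop system. -/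
open RealInnerProductSpace

/-- An extended class K∞ function: continuous, strictly increasing, zero at zero,
tending to `∞` at `∞` and to `-∞` at `-∞`. -/
structure ClassKInfE (α : ℝ → ℝ) : Prop where
  continuous : Continuous α
  strictMono : StrictMono α
  map_zero : α 0 = 0
  tendsto_atTop : Filter.Tendsto α Filter.atTop Filter.atTop
  tendsto_atBot : Filter.Tendsto α Filter.atBot Filter.atBot

/-- Lie derivative of `h` along the vector field `f`: `L_f h(x) = (∂h/∂x)(x) f(x)`. -/
noncomputable def LieF {n : ℕ} (h : EuclideanSpace ℝ (Fin n) → ℝ)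
    (f : EuclideanSpace ℝ (Fin n) → EuclideanSpace ℝ (Fin n))
    (x : EuclideanSpace ℝ (Fin n)) : ℝ :=
  fderiv ℝ h x (f x)

/-- Lie derivative of `h` along the input matrix `g`:
`L_g h(x) = (∂h/∂x)(x) g(x) ∈ ℝ^{1×m}`, viewed as a linear functional on `ℝᵐ`. -/
noncomputable def LieG {n m : ℕ} (h : EuclideanSpace ℝ (Fin n) → ℝ)
    (g : EuclideanSpace ℝ (Fin n) → (EuclideanSpace ℝ (Fin m) →L[ℝ] EuclideanSpace ℝ (Fin n)))
    (x : EuclideanSpace ℝ (Fin n)) : EuclideanSpace ℝ (Fin m) →L[ℝ] ℝ :=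
  (fderiv ℝ h x).comp (g x)

/-- if a continuous controller `k` satisfies the CBF inequality pointwise,
then the 0-superlevel set of `h` is forward invariant for the closed-loop system. -/
theorem cbf_forward_invariance {n m : ℕ}
    (f : EuclideanSpace ℝ (Fin n) → EuclideanSpace ℝ (Fin n))
    (g : EuclideanSpace ℝ (Fin n) → (EuclideanSpace ℝ (Fin m) →L[ℝ] EuclideanSpace ℝ (Fin n)))
    (h : EuclideanSpace ℝ (Fin n) → ℝ) (α : ℝ → ℝ)
    (hf : Continuous f) (hg : Continuous g) (hh : ContDiff ℝ 1 h)
    (hα : ClassKInfE α) (hαlip : LocallyLipschitz α)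
    (k : EuclideanSpace ℝ (Fin n) → EuclideanSpace ℝ (Fin m)) (hk : Continuous k)
    (hsafe : ∀ x : EuclideanSpace ℝ (Fin n),
      LieF h f x + LieG h g x (k x) ≥ -α (h x))
    (x : ℝ → EuclideanSpace ℝ (Fin n))
    (hode : ∀ t : ℝ, t ≥ 0 → HasDerivAt x (f (x t) + g (x t) (k (x t))) t)
    (h0 : h (x 0) ≥ 0) :
    ∀ t : ℝ, t ≥ 0 → h (x t) ≥ 0 := by
  have hhd : Differentiable ℝ h := hh.differentiable one_ne_zero
  set y : ℝ → ℝ := fun t => h (x t) with hy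
  have hyd : ∀ t : ℝ, t ≥ 0 →
      HasDerivAt y (LieF h f (x t) + LieG h g (x t) (k (x t))) t := by
    intro t ht
    have := (hhd (x t)).hasFDerivAt.comp_hasDerivAt t (hode t ht)
    simp only [LieF, LieG, ContinuousLinearMap.comp_apply, map_add] at this ⊢
    exact this
  by_contra hcon
  push_neg at hcon
  obtain ⟨t₀, ht₀, hyt₀⟩ := hcon
  set S : Set ℝ := {s | s ∈ Set.Icc (0:ℝ) t₀ ∧ 0 ≤ y s} with hS
  have hS0 : (0:ℝ) ∈ S := ⟨⟨le_refl 0, ht₀⟩, h0⟩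
  have hSne : S.Nonempty := ⟨0, hS0⟩
  have hSbdd : BddAbove S := ⟨t₀, fun s hs => hs.1.2⟩
  set t₁ := sSup S with ht₁def
  have ht₁mem : t₁ ∈ Set.Icc (0:ℝ) t₀ :=
    ⟨le_csSup hSbdd hS0, csSup_le hSne (fun s hs => hs.1.2)⟩
  have hyt₁ : 0 ≤ y t₁ := by
    have hcl : t₁ ∈ closure S := csSup_mem_closure hSne hSbdd
    have hca : ContinuousAt y t₁ := (hyd t₁ ht₁mem.1).continuousAt
    have htend : Filter.Tendsto y (nhdsWithin t₁ S) (nhds (y t₁)) :=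
      hca.continuousWithinAt.tendsto
    have hne : (nhdsWithin t₁ S).NeBot := mem_closure_iff_nhdsWithin_neBot.mp hcl
    exact ge_of_tendsto htend
      (Filter.eventually_of_mem self_mem_nhdsWithin fun s hs => hs.2)
  have ht₁lt : t₁ < t₀ :=
    lt_of_le_of_ne ht₁mem.2 (fun he => by rw [he] at hyt₁; linarith)
  have hneg : ∀ t ∈ Set.Ioc t₁ t₀, y t < 0 := by
    intro t ht
    by_contra hge
    push_neg at hge
    have : t ∈ S := ⟨⟨le_trans ht₁mem.1 ht.1.le, ht.2⟩, hge⟩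
    exact absurd (le_csSup hSbdd this) (not_le.mpr ht.1)
  have hmono : StrictMonoOn y (Set.Icc t₁ t₀) := by
    apply StrictMonoOn.mono ?_ (le_refl _)
    apply strictMonoOn_of_deriv_pos (convex_Icc t₁ t₀)
    · intro s hs
      exact ((hyd s (le_trans ht₁mem.1 hs.1)).continuousAt).continuousWithinAt
    · intro s hs
      rw [interior_Icc] at hs
      have hd := hyd s (le_trans ht₁mem.1 hs.1.le)
      rw [hd.deriv]
      have hys : y s < 0 := hneg s ⟨hs.1, hs.2.le⟩
      have hαneg : α (y s) < 0 := by
        have := hα.strictMono hys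
        rwa [hα.map_zero] at this
      have hs' := hsafe (x s)
      have hys' : y s = h (x s) := rfl
      rw [← hys'] at hs'
      linarith
  have := hmono (Set.left_mem_Icc.mpr ht₁lt.le) (Set.right_mem_Icc.mpr ht₁lt.le) ht₁lt
  linarith
end

section
/- Let α : ℝ → ℝ be a locally Lipschitz extended class K∞ function and let y : [0,∞) → ℝ be differentiable with y'(t) ≥ −α(y(t)) for all t ≥ 0. If y(0) ≥ 0, then y(t) ≥ 0 for all t ≥ 0. -/
open RealInnerProductSpace

/-- scalar comparison lemma: if `y'(t) ≥ -α(y(t))` and `y(0) ≥ 0`,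
then `y(t) ≥ 0` for all `t ≥ 0`. -/
theorem comparison_nonneg (α : ℝ → ℝ) (hα : ClassKInfE α) (hαlip : LocallyLipschitz α)
    (y y' : ℝ → ℝ)
    (hy : ∀ t : ℝ, t ≥ 0 → HasDerivAt y (y' t) t)
    (hineq : ∀ t : ℝ, t ≥ 0 → y' t ≥ -α (y t))
    (h0 : y 0 ≥ 0) :
    ∀ t : ℝ, t ≥ 0 → y t ≥ 0 := by
  intro t ht
  by_contra hneg
  push_neg at hneg
  have ht' : 0 < t := by
    rcases lt_or_eq_of_le ht with h | h
    · exact h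
    · exfalso; rw [← h] at hneg; linarith
  have hcont : ContinuousOn y (Set.Icc 0 t) := fun x hx =>
    (hy x hx.1).continuousAt.continuousWithinAt
  set S := Set.Icc (0:ℝ) t ∩ y ⁻¹' Set.Ici 0 with hSdef
  have hSclosed : IsClosed S :=
    hcont.preimage_isClosed_of_isClosed isClosed_Icc isClosed_Ici
  have h0S : (0:ℝ) ∈ S := ⟨⟨le_refl 0, le_of_lt ht'⟩, h0⟩
  have hSne : S.Nonempty := ⟨0, h0S⟩
  have hSbdd : BddAbove S := ⟨t, fun x hx => hx.1.2⟩
  set s := sSup S with hsdef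
  have hsS : s ∈ S := hSclosed.csSup_mem hSne hSbdd
  have hys : 0 ≤ y s := hsS.2
  have hs0 : 0 ≤ s := hsS.1.1
  have hst : s ≤ t := hsS.1.2
  have hsnet : s < t := by
    rcases lt_or_eq_of_le hst with h | h
    · exact h
    · exfalso; rw [h] at hys; linarith
  have hnegIoc : ∀ u ∈ Set.Ioc s t, y u < 0 := by
    intro u hu
    by_contra h
    push_neg at h
    have huS : u ∈ S := ⟨⟨le_trans hs0 hu.1.le, hu.2⟩, h⟩
    exact absurd (le_csSup hSbdd huS) (not_le.mpr hu.1)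
  have hcont' : ContinuousOn y (Set.Icc s t) :=
    hcont.mono (Set.Icc_subset_Icc hs0 (le_refl t))
  have hmono : StrictMonoOn y (Set.Icc s t) := by
    apply strictMonoOn_of_deriv_pos (convex_Icc s t) hcont'
    intro x hx
    rw [interior_Icc] at hx
    have hx0 : (0:ℝ) ≤ x := le_trans hs0 hx.1.le
    have hyx : y x < 0 := hnegIoc x ⟨hx.1, hx.2.le⟩
    have hαneg : α (y x) < 0 := by
      have := hα.strictMono hyx
      rwa [hα.map_zero] at this
    have hderiv : deriv y x = y' x := (hy x hx0).deriv
    rw [hderiv]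
    have := hineq x hx0
    linarith
  have : y s < y t :=
    hmono ⟨le_refl s, hst⟩ ⟨hst, le_refl t⟩ hsnet
  linarith
end

section
/- Let f : ℝⁿ → ℝⁿ and g : ℝⁿ → ℝⁿˣᵐ be continuous, h : ℝⁿ → ℝ be continuously differentiable, α be an extended class K∞ function, and k_n : ℝⁿ → ℝᵐ be continuous. Suppose the CBF condition holds: for all x, L_g h(x) = 0 implies L_f h(x) + α(h(x)) > 0. Define η(x) = −(L_f h(x) + L_g h(x) k_n(x) + α(h(x)))/‖L_g h(x)‖₂² if L_g h(x) ≠ 0 and η(x) = 0 if L_g h(x) = 0, and define k_QP(x) = k_n(x) + max{0, η(x)} L_g h(x)ᵀ. Then for every x ∈ ℝⁿ, L_f h(x) + L_g h(x) k_QP(x) ≥ −α(h(x)); i.e., k_QP(x) ∈ K_CBF(x). -/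
open RealInnerProductSpace Classical

/-- the explicit QP controller `k_QP` satisfies the CBF constraint
`L_f h(x) + L_g h(x) k_QP(x) ≥ -α(h(x))` at every point. -/
theorem kQP_satisfies_cbf_constraint {n m : ℕ}
    (f : EuclideanSpace ℝ (Fin n) → EuclideanSpace ℝ (Fin n))
    (g : EuclideanSpace ℝ (Fin n) → (EuclideanSpace ℝ (Fin m) →L[ℝ] EuclideanSpace ℝ (Fin n)))
    (h : EuclideanSpace ℝ (Fin n) → ℝ) (α : ℝ → ℝ)
    (hf : Continuous f) (hg : Continuous g) (hh : ContDiff ℝ 1 h) (hα : ClassKInfE α)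
    (kn : EuclideanSpace ℝ (Fin n) → EuclideanSpace ℝ (Fin m)) (hkn : Continuous kn)
    (hcbf : ∀ x : EuclideanSpace ℝ (Fin n), LieG h g x = 0 → LieF h f x + α (h x) > 0)
    (η : EuclideanSpace ℝ (Fin n) → ℝ)
    (hη : ∀ x, η x = if LieG h g x = 0 then 0
      else -(LieF h f x + LieG h g x (kn x) + α (h x)) / ‖LieG h g x‖ ^ 2)
    (kQP : EuclideanSpace ℝ (Fin n) → EuclideanSpace ℝ (Fin m))
    (hkQP : ∀ x, kQP x = kn x + max 0 (η x) •
      (InnerProductSpace.toDual ℝ (EuclideanSpace ℝ (Fin m))).symm (LieG h g x)) :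
    ∀ x : EuclideanSpace ℝ (Fin n), LieF h f x + LieG h g x (kQP x) ≥ -α (h x) := by
  intro x
  set L := LieG h g x with hL
  have key : L ((InnerProductSpace.toDual ℝ (EuclideanSpace ℝ (Fin m))).symm L) = ‖L‖ ^ 2 := by
    have := InnerProductSpace.toDual_symm_apply (𝕜 := ℝ)
      (E := EuclideanSpace ℝ (Fin m)) (y := L) (x := (InnerProductSpace.toDual ℝ
        (EuclideanSpace ℝ (Fin m))).symm L)
    rw [← this, real_inner_self_eq_norm_sq]
    congr 1
    simp
  rw [hkQP x, ← hL, map_add, map_smul]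
  simp only [smul_eq_mul, key]
  by_cases hz : L = 0
  · have := hcbf x hz
    rw [hz]
    simp only [ContinuousLinearMap.zero_apply, norm_zero]
    nlinarith [le_max_left 0 (η x)]
  · have hLpos : (0:ℝ) < ‖L‖ := norm_pos_iff.mpr hz
    have hnorm : (0:ℝ) < ‖L‖ ^ 2 := by positivity
    have hηx : η x = -(LieF h f x + L (kn x) + α (h x)) / ‖L‖ ^ 2 := by
      rw [hη x, ← hL]; simp [hz]
    by_cases hc : LieF h f x + L (kn x) + α (h x) ≥ 0
    · nlinarith [le_max_left 0 (η x)]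
    · have hηpos : 0 ≤ η x := by
        rw [hηx]
        apply div_nonneg (by linarith) (le_of_lt hnorm)
      have : max 0 (η x) = η x := max_eq_right hηpos
      rw [this, hηx, div_mul_cancel₀ _ (ne_of_gt hnorm)]
      linarith
end

section
/- Let a : ℝⁿ → ℝᵐ and ψ : ℝⁿ → ℝ be continuous and suppose that a(x) = 0 implies ψ(x) > 0 for every x ∈ ℝⁿ. Let k_n : ℝⁿ → ℝᵐ be continuous. Define η(x) = −ψ(x)/‖a(x)‖₂² if a(x) ≠ 0 and η(x) = 0 if a(x) = 0, and k_QP(x) = k_n(x) + max{0, η(x)} a(x). Then k_QP : ℝⁿ → ℝᵐ is continuous. -/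
open RealInnerProductSpace

open Classical

/-- continuity of the QP-type controller
`k_QP(x) = k_n(x) + max{0, η(x)} a(x)` with `η(x) = -ψ(x)/‖a(x)‖²` off `{a = 0}`. -/
theorem kQP_continuous {n m : ℕ}
    (a : EuclideanSpace ℝ (Fin n) → EuclideanSpace ℝ (Fin m))
    (ψ : EuclideanSpace ℝ (Fin n) → ℝ)
    (kn : EuclideanSpace ℝ (Fin n) → EuclideanSpace ℝ (Fin m))
    (hacont : Continuous a) (hψ : Continuous ψ) (hkn : Continuous kn)
    (hpos : ∀ x, a x = 0 → ψ x > 0)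
    (η : EuclideanSpace ℝ (Fin n) → ℝ)
    (hη : ∀ x, η x = if a x = 0 then 0 else -ψ x / ‖a x‖ ^ 2)
    (kQP : EuclideanSpace ℝ (Fin n) → EuclideanSpace ℝ (Fin m))
    (hkQP : ∀ x, kQP x = kn x + max 0 (η x) • a x) :
    Continuous kQP := by
  have hc : Continuous (fun x => max 0 (η x) • a x) := by
    rw [continuous_iff_continuousAt]
    intro x₀
    by_cases h0 : a x₀ = 0
    · have hev : (fun _ : EuclideanSpace ℝ (Fin n) => (0 : EuclideanSpace ℝ (Fin m)))
        =ᶠ[nhds x₀] (fun y => max 0 (η y) • a y) := by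
        filter_upwards [(isOpen_lt continuous_const hψ).mem_nhds (hpos x₀ h0)] with y hy
        by_cases hay : a y = 0
        · simp [hη y, hay]
        · have : η y ≤ 0 := by
            rw [hη y, if_neg hay]
            apply div_nonpos_of_nonpos_of_nonneg <;> [linarith; positivity]
          simp [max_eq_left this]
      exact continuousAt_const.congr hev
    · have hev : (fun y => max 0 (-ψ y / ‖a y‖ ^ 2) • a y)
        =ᶠ[nhds x₀] (fun y => max 0 (η y) • a y) := by
        filter_upwards [(isOpen_ne_fun hacont continuous_const).mem_nhds h0] with y hy
        rw [hη y, if_neg hy]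
      refine ContinuousAt.congr ?_ hev
      have hden : (‖a x₀‖ : ℝ) ^ 2 ≠ 0 := pow_ne_zero 2 (norm_ne_zero_iff.mpr h0)
      exact ((continuousAt_const.max ((hψ.neg.continuousAt).div
        ((hacont.norm.pow 2).continuousAt) hden)).smul hacont.continuousAt)
  have : kQP = fun x => kn x + max 0 (η x) • a x := funext hkQP
  rw [this]
  exact hkn.add hc
end

section
/- Let f : ℝⁿ → ℝⁿ and g : ℝⁿ → ℝⁿ (single input, m = 1) be continuous, h : ℝⁿ → ℝ be continuously differentiable, α be an extended class K∞ function, and k_n : ℝⁿ → ℝ be continuous. Define k_QP(x) = k_n(x) + max{0, η(x)} L_g h(x) with η(x) = −(L_f h(x) + L_g h(x) k_n(x) + α(h(x)))/L_g h(x)² when L_g h(x) ≠ 0 and η(x) = 0 otherwise. Then: (i) if L_g h(x) > 0, k_QP(x) = max{k_n(x), −(L_f h(x) + α(h(x)))/L_g h(x)}; (ii) if L_g h(x) < 0, k_QP(x) = min{k_n(x), −(L_f h(x) + α(h(x)))/L_g h(x)}; (iii) if L_g h(x) = 0, k_QP(x) = k_n(x). -/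
open RealInnerProductSpace

open Classical

/-- min/max switching structure of the single-input QP controller. -/
theorem kQP_single_input_switching {n : ℕ}
    (f : EuclideanSpace ℝ (Fin n) → EuclideanSpace ℝ (Fin n))
    (g : EuclideanSpace ℝ (Fin n) → EuclideanSpace ℝ (Fin n))
    (h : EuclideanSpace ℝ (Fin n) → ℝ) (α : ℝ → ℝ)
    (hf : Continuous f) (hg : Continuous g) (hh : ContDiff ℝ 1 h) (hα : ClassKInfE α)
    (kn : EuclideanSpace ℝ (Fin n) → ℝ) (hkn : Continuous kn)
    (η : EuclideanSpace ℝ (Fin n) → ℝ)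
    (hη : ∀ x, η x = if LieF h g x = 0 then 0
      else -(LieF h f x + LieF h g x * kn x + α (h x)) / (LieF h g x) ^ 2)
    (kQP : EuclideanSpace ℝ (Fin n) → ℝ)
    (hkQP : ∀ x, kQP x = kn x + max 0 (η x) * LieF h g x) :
    ∀ x : EuclideanSpace ℝ (Fin n),
      (LieF h g x > 0 →
        kQP x = max (kn x) (-(LieF h f x + α (h x)) / LieF h g x)) ∧
      (LieF h g x < 0 →
        kQP x = min (kn x) (-(LieF h f x + α (h x)) / LieF h g x)) ∧
      (LieF h g x = 0 → kQP x = kn x) := by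
  intro x
  set b := LieF h g x with hb
  set a := LieF h f x with ha
  set c := α (h x) with hc
  set k := kn x with hk
  refine ⟨?_, ?_, ?_⟩
  · intro hbpos
    have hbne : b ≠ 0 := ne_of_gt hbpos
    have hηx : η x = -(a + b * k + c) / b ^ 2 := by rw [hη x]; exact if_neg hbne
    rcases le_or_gt (η x) 0 with hle | hlt
    · have hb2 : (0:ℝ) < b ^ 2 := by positivity
      have h1 : 0 ≤ a + b * k + c := by
        rcases div_nonpos_iff.mp (hηx ▸ hle) with ⟨h2, _⟩ | ⟨_, h3⟩ <;> nlinarith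
      have h2 : -(a + c) / b ≤ k := by
        rw [div_le_iff₀ hbpos]; nlinarith
      rw [hkQP x, max_eq_left hle, max_eq_left h2]; ring
    · have h1 : a + b * k + c ≤ 0 := by
        by_contra hcon
        push_neg at hcon
        have : η x < 0 := by
          rw [hηx]; apply div_neg_of_neg_of_pos <;> nlinarith
        linarith
      have h2 : k ≤ -(a + c) / b := by
        rw [le_div_iff₀ hbpos]; nlinarith
      rw [hkQP x, max_eq_right hlt.le, max_eq_right h2, hηx]
      field_simp
      ring
  · intro hbneg
    have hbne : b ≠ 0 := ne_of_lt hbneg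
    have hηx : η x = -(a + b * k + c) / b ^ 2 := by rw [hη x]; exact if_neg hbne
    rcases le_or_gt (η x) 0 with hle | hlt
    · have hb2 : (0:ℝ) < b ^ 2 := by positivity
      have h1 : 0 ≤ a + b * k + c := by
        rcases div_nonpos_iff.mp (hηx ▸ hle) with ⟨h2, _⟩ | ⟨_, h3⟩ <;> nlinarith
      have h2 : k ≤ -(a + c) / b := by
        rw [le_div_iff_of_neg hbneg]; nlinarith
      rw [hkQP x, max_eq_left hle, min_eq_left h2]; ring
    · have h1 : a + b * k + c ≤ 0 := by
        by_contra hcon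
        push_neg at hcon
        have : η x < 0 := by
          rw [hηx]; apply div_neg_of_neg_of_pos <;> nlinarith
        linarith
      have h2 : -(a + c) / b ≤ k := by
        rw [div_le_iff_of_neg hbneg]; nlinarith
      rw [hkQP x, max_eq_right hlt.le, min_eq_right h2, hηx]
      field_simp
      ring
  · intro hbz
    rw [hkQP x, ← hb, ← hk, hbz]; ring
end

section
/- Consider the inverted pendulum vector fields f(θ, θ̇) = (θ̇, (g/l) sin θ) and g-vector (0, 1/(ml²)) with parameters m, l, g > 0, the function h(θ, θ̇) = 1 − θ²/a² − θ̇²/b² − θθ̇/(ab) with a, b > 0, and α(r) = α_c r with 0 < α_c ≤ b/a. Then for every (θ₀, θ̇₀) with L_g h(θ₀, θ̇₀) = 0 (equivalently θ̇₀ = −(b/(2a)) θ₀), one has L_f h(θ₀, θ̇₀) + α_c h(θ₀, θ̇₀) = α_c + (3/(4a²))(b/a − α_c) θ₀² > 0. Consequently h satisfies the CBF condition: L_g h(x) = 0 implies L_f h(x) + α(h(x)) > 0 for all x ∈ ℝ². -/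
/-- The inverted pendulum barrier candidate `h(θ, θ̇) = 1 − θ²/a² − θ̇²/b² − θθ̇/(ab)`. -/
noncomputable def pendH (a b : ℝ) : ℝ × ℝ → ℝ :=
  fun p => 1 - p.1 ^ 2 / a ^ 2 - p.2 ^ 2 / b ^ 2 - p.1 * p.2 / (a * b)

lemma pendH_fderiv_apply (a b θ θd u v : ℝ) :
    fderiv ℝ (pendH a b) (θ, θd) (u, v)
      = -(2 * θ * u) / a ^ 2 - 2 * θd * v / b ^ 2 - (u * θd + θ * v) / (a * b) := by
  have h1 : HasFDerivAt (fun p : ℝ × ℝ => p.1) (ContinuousLinearMap.fst ℝ ℝ ℝ) (θ, θd) :=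
    hasFDerivAt_fst
  have h2 : HasFDerivAt (fun p : ℝ × ℝ => p.2) (ContinuousLinearMap.snd ℝ ℝ ℝ) (θ, θd) :=
    hasFDerivAt_snd
  have H := (((hasFDerivAt_const (1:ℝ) ((θ, θd) : ℝ × ℝ)).sub
      ((h1.mul h1).mul_const ((a ^ 2)⁻¹))).sub ((h2.mul h2).mul_const ((b ^ 2)⁻¹))).sub
      ((h1.mul h2).mul_const ((a * b)⁻¹))
  have hfun : pendH a b
      = fun p : ℝ × ℝ => (1 - (p.1 * p.1) * (a ^ 2)⁻¹ - (p.2 * p.2) * (b ^ 2)⁻¹)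
          - (p.1 * p.2) * (a * b)⁻¹ := by
    funext p; simp [pendH]; ring
  rw [hfun]
  rw [(show HasFDerivAt (fun p : ℝ × ℝ => (1 - (p.1 * p.1) * (a ^ 2)⁻¹ - (p.2 * p.2) * (b ^ 2)⁻¹)
          - (p.1 * p.2) * (a * b)⁻¹) _ (θ, θd) from H).fderiv]
  simp
  ring

/-- on the set where `L_g h = 0`, one has
`L_f h + α_c h = α_c + (3/(4a²))(b/a − α_c) θ₀² > 0`; hence `h` satisfies the CBF
condition for `α(r) = α_c r` with `0 < α_c ≤ b/a`. -/
theorem pendulum_cbf_condition (m l g a b αc : ℝ)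
    (hm : 0 < m) (hl : 0 < l) (hg : 0 < g) (ha : 0 < a) (hb : 0 < b)
    (hαc : 0 < αc) (hαc' : αc ≤ b / a) :
    ∀ θ₀ θd₀ : ℝ,
      fderiv ℝ (pendH a b) (θ₀, θd₀) (0, 1 / (m * l ^ 2)) = 0 →
        (fderiv ℝ (pendH a b) (θ₀, θd₀) (θd₀, (g / l) * Real.sin θ₀)
            + αc * pendH a b (θ₀, θd₀)
          = αc + 3 / (4 * a ^ 2) * (b / a - αc) * θ₀ ^ 2) ∧
        0 < fderiv ℝ (pendH a b) (θ₀, θd₀) (θd₀, (g / l) * Real.sin θ₀)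
            + αc * pendH a b (θ₀, θd₀) := by
  intro θ₀ θd₀ hLg
  rw [pendH_fderiv_apply] at hLg
  rw [pendH_fderiv_apply]
  have hml : m * l ^ 2 ≠ 0 := by positivity
  have ha' : a ≠ 0 := ne_of_gt ha
  have hb' : b ≠ 0 := ne_of_gt hb
  -- from the constraint, θd₀ = -(b/(2a)) θ₀
  have hkey : θd₀ = -(b / (2 * a)) * θ₀ := by
    field_simp at hLg
    have h0 : m * l ^ 2 * (2 * θd₀ * (a * b) + θ₀ * b ^ 2) = 0 := by
      have h3 : 2 * a * θd₀ + b * θ₀ = 0 := by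
        have : a * (2 * a * θd₀ + b * θ₀) = 0 := by linear_combination -hLg
        exact (mul_eq_zero.mp this).resolve_left ha'
      linear_combination m * l ^ 2 * b * h3
    have h1 : 2 * θd₀ * (a * b) + θ₀ * b ^ 2 = 0 :=
      (mul_eq_zero.mp h0).resolve_left hml
    field_simp
    nlinarith [h1, sq_nonneg b, mul_pos ha hb]
  subst hkey
  have hEq : -(2 * θ₀ * (-(b / (2 * a)) * θ₀)) / a ^ 2
        - 2 * (-(b / (2 * a)) * θ₀) * (g / l * Real.sin θ₀) / b ^ 2
        - ((-(b / (2 * a)) * θ₀) * (-(b / (2 * a)) * θ₀) + θ₀ * (g / l * Real.sin θ₀)) / (a * b)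
        + αc * pendH a b (θ₀, -(b / (2 * a)) * θ₀)
      = αc + 3 / (4 * a ^ 2) * (b / a - αc) * θ₀ ^ 2 := by
    simp only [pendH]
    field_simp
    ring
  refine ⟨hEq, ?_⟩
  rw [hEq]
  have h2 : 0 ≤ 3 / (4 * a ^ 2) * (b / a - αc) * θ₀ ^ 2 := by
    have : 0 ≤ b / a - αc := by linarith
    positivity
  linarith
end

section
/- Let x ∈ ℝⁿ, let h : ℝⁿ → ℝ be continuously differentiable, α an extended class K∞ function, ε : ℝ → ℝ with ε(h(x)) > 0, δ ≥ 0, and let u ∈ ℝᵐ satisfy the ISSf constraint L_f h(x) + L_g h(x) u ≥ −α(h(x)) + ‖L_g h(x)‖₂²/ε(h(x)). Then for every d ∈ ℝᵐ with ‖d‖₂ ≤ δ: L_f h(x) + L_g h(x)(u + d) ≥ −α(h(x)) + ‖L_g h(x)‖₂²/ε(h(x)) − ‖L_g h(x)‖₂ δ ≥ −α(h(x)) − ε(h(x)) δ²/4. -/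
open RealInnerProductSpace

/-- pointwise robustness bound for the ISSf constraint under a bounded
input disturbance `d` with `‖d‖ ≤ δ`. -/
theorem issf_pointwise_bound {n m : ℕ}
    (f : EuclideanSpace ℝ (Fin n) → EuclideanSpace ℝ (Fin n))
    (g : EuclideanSpace ℝ (Fin n) → (EuclideanSpace ℝ (Fin m) →L[ℝ] EuclideanSpace ℝ (Fin n)))
    (h : EuclideanSpace ℝ (Fin n) → ℝ) (α : ℝ → ℝ) (ε : ℝ → ℝ)
    (hh : ContDiff ℝ 1 h) (hα : ClassKInfE α)
    (x : EuclideanSpace ℝ (Fin n)) (hε : ε (h x) > 0)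
    (δ : ℝ) (hδ : 0 ≤ δ)
    (u : EuclideanSpace ℝ (Fin m))
    (hu : LieF h f x + LieG h g x u ≥ -α (h x) + ‖LieG h g x‖ ^ 2 / ε (h x)) :
    ∀ d : EuclideanSpace ℝ (Fin m), ‖d‖ ≤ δ →
      LieF h f x + LieG h g x (u + d) ≥
        -α (h x) + ‖LieG h g x‖ ^ 2 / ε (h x) - ‖LieG h g x‖ * δ ∧
      -α (h x) + ‖LieG h g x‖ ^ 2 / ε (h x) - ‖LieG h g x‖ * δ ≥
        -α (h x) - ε (h x) * δ ^ 2 / 4 := by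
  intro d hd
  have hLd : |LieG h g x d| ≤ ‖LieG h g x‖ * δ := by
    calc |LieG h g x d| = ‖LieG h g x d‖ := rfl
    _ ≤ ‖LieG h g x‖ * ‖d‖ := (LieG h g x).le_opNorm d
    _ ≤ ‖LieG h g x‖ * δ := by
        exact mul_le_mul_of_nonneg_left hd (norm_nonneg _)
  have h1 : LieG h g x d ≥ -(‖LieG h g x‖ * δ) := (abs_le.mp hLd).1
  constructor
  · have : LieG h g x (u + d) = LieG h g x u + LieG h g x d := map_add _ _ _
    rw [this]
    linarith
  · have hq : ‖LieG h g x‖ ^ 2 / ε (h x) * ε (h x) = ‖LieG h g x‖ ^ 2 :=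
      div_mul_cancel₀ _ (ne_of_gt hε)
    nlinarith [sq_nonneg (‖LieG h g x‖ - ε (h x) * δ / 2), hε, sq_nonneg (ε (h x))]
end

section
/- Let f : ℝⁿ → ℝⁿ and g : ℝⁿ → ℝⁿˣᵐ be continuous, h : ℝⁿ → ℝ be continuously differentiable, α be a locally Lipschitz extended class K∞ function with continuously differentiable inverse α⁻¹, and ε : ℝ → ℝ_{>0} be continuously differentiable and nondecreasing. Let k : ℝⁿ → ℝᵐ be continuous with L_f h(x) + L_g h(x) k(x) ≥ −α(h(x)) + ‖L_g h(x)‖₂²/ε(h(x)) for all x. Fix δ ≥ 0, let d : [0,∞) → ℝᵐ be piecewise continuous with ‖d(t)‖₂ ≤ δ for all t, and let x : [0,∞) → ℝⁿ be differentiable with ẋ(t) = f(x(t)) + g(x(t))(k(x(t)) + d(t)). Define γ(r, δ) = −α⁻¹(−ε(r) δ²/4). If h(x(0)) + γ(h(x(0)), δ) ≥ 0, then h(x(t)) + γ(h(x(t)), δ) ≥ 0 for all t ≥ 0; i.e., the set C_δ = {x : h(x) + γ(h(x), δ) ≥ 0} is forward invariant for the disturbed closed-loop system. -/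
open RealInnerProductSpace

lemma antitone_deriv_nonpos' {f : ℝ → ℝ} (hf : Antitone f) {f' x : ℝ}
    (h : HasDerivAt f f' x) : f' ≤ 0 := by
  have h1 : HasDerivWithinAt f f' (Set.Ioi x) x := h.hasDerivWithinAt
  rw [hasDerivWithinAt_iff_tendsto_slope] at h1
  have hset : Set.Ioi x \ {x} = Set.Ioi x := by
    apply Set.diff_singleton_eq_self; simp
  rw [hset] at h1
  refine le_of_tendsto h1 ?_
  filter_upwards [self_mem_nhdsWithin] with y hy
  have hy' : x < y := hy
  rw [slope_def_field]
  have : f y ≤ f x := hf hy'.le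
  apply div_nonpos_of_nonpos_of_nonneg <;> linarith


/-- ISSf forward invariance — if the controller satisfies the ISSf-CBF
inequality, then the inflated set `C_δ = {x : h(x) + γ(h(x), δ) ≥ 0}` with
`γ(r, δ) = −α⁻¹(−ε(r) δ²/4)` is forward invariant for the disturbed closed loop. -/
theorem issf_forward_invariance {n m : ℕ}
    (f : EuclideanSpace ℝ (Fin n) → EuclideanSpace ℝ (Fin n))
    (g : EuclideanSpace ℝ (Fin n) → (EuclideanSpace ℝ (Fin m) →L[ℝ] EuclideanSpace ℝ (Fin n)))
    (h : EuclideanSpace ℝ (Fin n) → ℝ) (α αinv ε : ℝ → ℝ)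
    (hf : Continuous f) (hg : Continuous g) (hh : ContDiff ℝ 1 h)
    (hα : ClassKInfE α) (hαlip : LocallyLipschitz α)
    (hαinv₁ : Function.LeftInverse αinv α) (hαinv₂ : Function.RightInverse αinv α)
    (hαinvC1 : ContDiff ℝ 1 αinv)
    (hεpos : ∀ r : ℝ, 0 < ε r) (hεC1 : ContDiff ℝ 1 ε) (hεmono : Monotone ε)
    (k : EuclideanSpace ℝ (Fin n) → EuclideanSpace ℝ (Fin m)) (hk : Continuous k)
    (hsafe : ∀ x : EuclideanSpace ℝ (Fin n),
      LieF h f x + LieG h g x (k x) ≥ -α (h x) + ‖LieG h g x‖ ^ 2 / ε (h x))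
    (δ : ℝ) (hδ : 0 ≤ δ)
    (d : ℝ → EuclideanSpace ℝ (Fin m))
    (hd_pc : ∃ T : Set ℝ, T.Countable ∧ ∀ t ∉ T, ContinuousAt d t)
    (hd_bdd : ∀ t : ℝ, ‖d t‖ ≤ δ)
    (x : ℝ → EuclideanSpace ℝ (Fin n))
    (hode : ∀ t : ℝ, t ≥ 0 → HasDerivAt x (f (x t) + g (x t) (k (x t) + d t)) t)
    (h0 : h (x 0) + -αinv (-(ε (h (x 0)) * δ ^ 2 / 4)) ≥ 0) :
    ∀ t : ℝ, t ≥ 0 → h (x t) + -αinv (-(ε (h (x t)) * δ ^ 2 / 4)) ≥ 0 := by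
  intro t₁ ht₁
  by_contra hcon
  push_neg at hcon
  -- definitions
  set c : ℝ → ℝ := fun r => -(ε r * δ ^ 2 / 4) with hc_def
  set ψ : ℝ → ℝ := fun r => αinv (c r) with hψ_def
  set w : ℝ → ℝ := fun t => h (x t) with hw_def
  set u : ℝ → ℝ := fun t => w t - ψ (w t) with hu_def
  set W : ℝ → ℝ := fun t =>
    LieF h f (x t) + LieG h g (x t) (k (x t)) + LieG h g (x t) (d t) with hW_def
  have hu0 : 0 ≤ u 0 := by simp only [hu_def, hw_def, hψ_def, hc_def]; linarith [h0]
  have hu1 : u t₁ < 0 := by simp only [hu_def, hw_def, hψ_def, hc_def]; linarith [hcon]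
  -- basic smoothness
  have hcC1 : ContDiff ℝ 1 c := ((hεC1.mul contDiff_const).div_const 4).neg
  have hψC1 : ContDiff ℝ 1 ψ := hαinvC1.comp hcC1
  have hψdiff : Differentiable ℝ ψ := hψC1.differentiable one_ne_zero
  -- monotonicity facts
  have hαinv_mono : Monotone αinv := by
    intro a b hab
    by_contra hlt
    push_neg at hlt
    have h2 := hα.strictMono hlt
    rw [hαinv₂, hαinv₂] at h2
    exact absurd hab (not_le.mpr h2)
  have hc_anti : Antitone c := by
    intro a b hab
    have h1 := hεmono hab
    have h2 : (0:ℝ) ≤ δ ^ 2 := sq_nonneg δ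
    simp only [hc_def]
    nlinarith
  have hψ_anti : Antitone ψ := fun a b hab => hαinv_mono (hc_anti hab)
  have hψ'le : ∀ r, deriv ψ r ≤ 0 := fun r =>
    antitone_deriv_nonpos' hψ_anti (hψdiff r).hasDerivAt
  -- derivative of w
  have hw' : ∀ t : ℝ, 0 ≤ t → HasDerivAt w (W t) t := by
    intro t ht
    have hx' := hode t ht
    have hhD : HasFDerivAt h (fderiv ℝ h (x t)) (x t) :=
      (hh.differentiable one_ne_zero (x t)).hasFDerivAt
    have hcomp := hhD.comp_hasDerivAt t hx'
    refine hcomp.congr_deriv ?_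
    simp only [hW_def, LieF, LieG, ContinuousLinearMap.comp_apply, map_add]
    ring
  -- key differential inequality
  have hkey : ∀ t : ℝ, 0 ≤ t → c (w t) - α (w t) ≤ W t := by
    intro t ht
    have h1 := hsafe (x t)
    set a : ℝ := ‖LieG h g (x t)‖ with ha_def
    have ha0 : 0 ≤ a := norm_nonneg _
    have h2 : |LieG h g (x t) (d t)| ≤ a * δ := by
      calc |LieG h g (x t) (d t)| = ‖LieG h g (x t) (d t)‖ := (Real.norm_eq_abs _).symm
        _ ≤ a * ‖d t‖ := ContinuousLinearMap.le_opNorm _ _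
        _ ≤ a * δ := mul_le_mul_of_nonneg_left (hd_bdd t) ha0
    have h2' : -(a * δ) ≤ LieG h g (x t) (d t) := (abs_le.mp h2).1
    have he := hεpos (w t)
    have h3 : -(ε (w t) * δ ^ 2 / 4) ≤ a ^ 2 / ε (w t) - a * δ := by
      have hexp : a ^ 2 / ε (w t) - a * δ + ε (w t) * δ ^ 2 / 4
          = (a - ε (w t) * δ / 2) ^ 2 / ε (w t) := by
        field_simp
        ring
      have hnn : 0 ≤ (a - ε (w t) * δ / 2) ^ 2 / ε (w t) :=
        div_nonneg (sq_nonneg _) he.le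
      linarith [hexp ▸ hnn]
    simp only [hW_def, hc_def, hw_def] at *
    linarith
  -- continuity of u on [0, ∞)
  have hu' : ∀ t : ℝ, 0 ≤ t →
      HasDerivAt u ((1 - deriv ψ (w t)) * W t) t := by
    intro t ht
    have h1 := hw' t ht
    have h2 : HasDerivAt (fun s => ψ (w s)) (deriv ψ (w t) * W t) t :=
      ((hψdiff (w t)).hasDerivAt).comp t h1
    have h3 := h1.sub h2
    refine h3.congr_deriv ?_
    ring
  have hucont : ∀ t : ℝ, 0 ≤ t → ContinuousAt u t := fun t ht =>
    (hu' t ht).continuousAt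
  -- definition of t₀
  set S : Set ℝ := {t | t ∈ Set.Icc 0 t₁ ∧ 0 ≤ u t} with hS_def
  have hS_ne : (0:ℝ) ∈ S := ⟨⟨le_rfl, ht₁⟩, hu0⟩
  have hS_bdd : BddAbove S := ⟨t₁, fun t ht => ht.1.2⟩
  have hS_closed : IsClosed S := by
    have hcont : ContinuousOn u (Set.Icc 0 t₁) := fun t ht =>
      (hucont t ht.1).continuousWithinAt
    have := hcont.preimage_isClosed_of_isClosed isClosed_Icc (isClosed_Ici (a := (0:ℝ)))
    convert this using 1
    rfl
  set t₀ : ℝ := sSup S with ht₀_def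
  have ht₀S : t₀ ∈ S := hS_closed.csSup_mem ⟨0, hS_ne⟩ hS_bdd
  have ht₀0 : 0 ≤ t₀ := ht₀S.1.1
  have ht₀t₁ : t₀ ≤ t₁ := ht₀S.1.2
  have hut₀ : 0 ≤ u t₀ := ht₀S.2
  have ht₀lt : t₀ < t₁ := by
    rcases lt_or_eq_of_le ht₀t₁ with h' | h'
    · exact h'
    · exact absurd (h' ▸ hut₀) (not_le.mpr hu1)
  have hneg : ∀ t : ℝ, t₀ < t → t ≤ t₁ → u t < 0 := by
    intro t h1 h2
    by_contra hge
    push_neg at hge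
    have : t ∈ S := ⟨⟨le_trans ht₀0 h1.le, h2⟩, hge⟩
    exact absurd (le_csSup hS_bdd this) (not_le.mpr h1)
  have hu_t₀ : u t₀ = 0 := by
    refine le_antisymm ?_ hut₀
    have htend : Filter.Tendsto u (nhdsWithin t₀ (Set.Ioi t₀)) (nhds (u t₀)) :=
      ((hucont t₀ ht₀0).continuousWithinAt).tendsto
    refine le_of_tendsto htend ?_
    filter_upwards [Ioc_mem_nhdsGT_of_mem ⟨le_refl t₀, ht₀lt⟩] with t ht
    exact (hneg t ht.1 ht.2).le
  set r₀ : ℝ := w t₀ with hr₀_def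
  have hψr₀ : ψ r₀ = r₀ := by
    simp only [hu_def] at hu_t₀
    linarith
  have hφr₀ : c r₀ - α r₀ = 0 := by
    have : α (αinv (c r₀)) = c r₀ := hαinv₂ (c r₀)
    rw [show αinv (c r₀) = ψ r₀ from rfl, hψr₀] at this
    linarith
  -- local Lipschitz bound for φ = c - α at r₀
  have hφlip : LocallyLipschitz (fun r => c r - α r) :=
    hcC1.locallyLipschitz.sub hαlip
  obtain ⟨K, s, hs_nhds, hKlip⟩ := hφlip r₀
  have hψ'cont : Continuous (deriv ψ) := hψC1.continuous_deriv le_rfl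
  set M : ℝ := 2 - deriv ψ r₀ with hM_def
  set s₂ : Set ℝ := deriv ψ ⁻¹' Set.Ioi (deriv ψ r₀ - 1) with hs₂_def
  have hs₂ : s₂ ∈ nhds r₀ :=
    hψ'cont.continuousAt.preimage_mem_nhds (Ioi_mem_nhds (by linarith))
  have hnb : w ⁻¹' (s ∩ s₂) ∈ nhds t₀ :=
    (hw' t₀ ht₀0).continuousAt (Filter.inter_mem hs_nhds hs₂)
  obtain ⟨τ, hτpos, hτball⟩ := Metric.mem_nhds_iff.mp hnb
  set t₂ : ℝ := min t₁ (t₀ + τ/2) with ht₂_def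
  have ht₂gt : t₀ < t₂ := lt_min ht₀lt (by linarith)
  have ht₂le : t₂ ≤ t₁ := min_le_left _ _
  have hmem : ∀ t ∈ Set.Icc t₀ t₂, w t ∈ s ∩ s₂ := by
    intro t ht
    apply hτball
    rw [Metric.mem_ball, Real.dist_eq, abs_of_nonneg (by linarith [ht.1])]
    have : t ≤ t₀ + τ/2 := le_trans ht.2 (min_le_right _ _)
    linarith
  set L : ℝ := M * (K : ℝ) with hL_def
  -- the derivative bound on the interval
  have hbound : ∀ t ∈ Set.Ioo t₀ t₂, L * u t ≤ (1 - deriv ψ (w t)) * W t := by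
    intro t ht
    have ht0 : (0:ℝ) ≤ t := le_trans ht₀0 ht.1.le
    obtain ⟨hms, hm2⟩ := hmem t ⟨ht.1.le, ht.2.le⟩
    have hm2' : deriv ψ r₀ - 1 < deriv ψ (w t) := hm2
    have hut : u t < 0 := hneg t ht.1 (le_trans ht.2.le ht₂le)
    have hwle : w t ≤ r₀ := by
      by_contra hgt
      push_neg at hgt
      have h5 : ψ (w t) ≤ ψ r₀ := hψ_anti hgt.le
      simp only [hu_def] at hut
      linarith
    have hkey1 : r₀ - w t ≤ - u t := by
      have h5 : ψ r₀ ≤ ψ (w t) := hψ_anti hwle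
      simp only [hu_def]
      linarith
    have hr₀s : r₀ ∈ s := mem_of_mem_nhds hs_nhds
    have hlips := hKlip.dist_le_mul (w t) hms r₀ hr₀s
    rw [Real.dist_eq, Real.dist_eq] at hlips
    have hφlb : -((K:ℝ) * (r₀ - w t)) ≤ c (w t) - α (w t) := by
      have h6 : |c (w t) - α (w t) - (c r₀ - α r₀)| ≤ (K:ℝ) * |w t - r₀| := hlips
      rw [hφr₀, sub_zero, abs_sub_comm (w t) r₀, abs_of_nonneg (by linarith : (0:ℝ) ≤ r₀ - w t)] at h6
      have := (abs_le.mp h6).1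
      linarith
    have hW_lb : (K:ℝ) * u t ≤ W t := by
      have h7 := hkey t ht0
      have h8 : (K:ℝ) * u t ≤ -((K:ℝ) * (r₀ - w t)) := by
        have hK0 : (0:ℝ) ≤ (K:ℝ) := K.coe_nonneg
        nlinarith
      linarith
    have hmlb : (1:ℝ) ≤ 1 - deriv ψ (w t) := by linarith [hψ'le (w t)]
    have hmub : 1 - deriv ψ (w t) ≤ M := by simp only [hM_def]; linarith
    have hKu : (K:ℝ) * u t ≤ 0 := mul_nonpos_of_nonneg_of_nonpos K.coe_nonneg hut.le
    calc L * u t = M * ((K:ℝ) * u t) := by rw [hL_def]; ring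
      _ ≤ (1 - deriv ψ (w t)) * ((K:ℝ) * u t) := mul_le_mul_of_nonpos_right hmub hKu
      _ ≤ (1 - deriv ψ (w t)) * W t :=
          mul_le_mul_of_nonneg_left hW_lb (by linarith)
  -- the exponential trick
  set z : ℝ → ℝ := fun t => u t * Real.exp (-L * t) with hz_def
  have hz' : ∀ t : ℝ, 0 ≤ t → HasDerivAt z
      ((1 - deriv ψ (w t)) * W t * Real.exp (-L * t) + u t * (Real.exp (-L * t) * -L)) t := by
    intro t ht
    have h1 : HasDerivAt (fun s : ℝ => -L * s) (-L) t := by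
      simpa using (hasDerivAt_id t).const_mul (-L)
    have h2 : HasDerivAt (fun s : ℝ => Real.exp (-L * s)) (Real.exp (-L * t) * -L) t := h1.exp
    exact (hu' t ht).mul h2
  have hzmono : MonotoneOn z (Set.Icc t₀ t₂) := by
    apply monotoneOn_of_deriv_nonneg (convex_Icc _ _)
    · intro t ht
      exact ((hz' t (le_trans ht₀0 ht.1)).continuousAt).continuousWithinAt
    · intro t ht
      rw [interior_Icc] at ht
      exact ((hz' t (le_trans ht₀0 ht.1.le)).differentiableAt).differentiableWithinAt
    · intro t ht
      rw [interior_Icc] at ht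
      rw [(hz' t (le_trans ht₀0 ht.1.le)).deriv]
      have hb := hbound t ht
      have h9 : 0 ≤ ((1 - deriv ψ (w t)) * W t - L * u t) * Real.exp (-L * t) :=
        mul_nonneg (by linarith) (Real.exp_pos _).le
      nlinarith [h9]
  have hfin := hzmono ⟨le_refl t₀, ht₂gt.le⟩ ⟨ht₂gt.le, le_refl t₂⟩ ht₂gt.le
  have hz0 : z t₀ = 0 := by simp [hz_def, hu_t₀]
  have hz2 : z t₂ < 0 := by
    have := hneg t₂ ht₂gt ht₂le
    have he := Real.exp_pos (-L * t₂)
    simp only [hz_def]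
    exact mul_neg_of_neg_of_pos this he
  linarith [hz0 ▸ hfin]
end

section
/- Let α : ℝ → ℝ be an extended class K∞ function and ε : ℝ → ℝ_{>0} be continuous and nondecreasing. For δ ≥ 0, define F_δ(r) = r − α⁻¹(−ε(r) δ²/4). Then for each δ ≥ 0 the equation F_δ(h*) = 0 has a unique solution h*(δ) ≤ 0, and the map δ ↦ h*(δ) is nonincreasing: if 0 ≤ δ₁ ≤ δ₂ then h*(δ₂) ≤ h*(δ₁). That is, the invariant set C_δ grows as the disturbance bound δ increases. -/
/-- for each `δ ≥ 0`, `F_δ(r) = r − α⁻¹(−ε(r) δ²/4)` has a unique zero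
`h*(δ)`, this zero is `≤ 0`, and `δ ↦ h*(δ)` is nonincreasing. -/
theorem hstar_unique_and_monotone (α αinv : ℝ → ℝ) (hα : ClassKInfE α)
    (hαinv₁ : Function.LeftInverse αinv α) (hαinv₂ : Function.RightInverse αinv α)
    (ε : ℝ → ℝ) (hεpos : ∀ r : ℝ, 0 < ε r)
    (hεcont : Continuous ε) (hεmono : Monotone ε) :
    (∀ δ : ℝ, 0 ≤ δ → ∃! r : ℝ, r - αinv (-(ε r * δ ^ 2 / 4)) = 0) ∧
    (∀ δ : ℝ, 0 ≤ δ → ∀ r : ℝ, r - αinv (-(ε r * δ ^ 2 / 4)) = 0 → r ≤ 0) ∧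
    (∀ δ₁ δ₂ r₁ r₂ : ℝ, 0 ≤ δ₁ → δ₁ ≤ δ₂ →
      r₁ - αinv (-(ε r₁ * δ₁ ^ 2 / 4)) = 0 →
      r₂ - αinv (-(ε r₂ * δ₂ ^ 2 / 4)) = 0 → r₂ ≤ r₁) := by
  have hsurj : Function.Surjective α := hαinv₂.surjective
  have hinj : Function.Injective α := hαinv₁.injective
  have hmono_inv : Monotone αinv := by
    intro a b h
    rw [← hα.strictMono.le_iff_le, hαinv₂ a, hαinv₂ b]
    exact h
  have hinv0 : αinv 0 = 0 := by
    have := hαinv₁ 0; rwa [hα.map_zero] at this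
  set e := StrictMono.orderIsoOfSurjective α hα.strictMono hsurj with he
  have hcoe : ⇑e = α := rfl
  have hinv_eq : αinv = ⇑e.symm := by
    funext x
    apply hinj
    rw [hαinv₂ x]
    have := e.apply_symm_apply x
    rw [hcoe] at this
    exact this.symm
  have hcont_inv : Continuous αinv := by
    rw [hinv_eq]; exact OrderIso.continuous e.symm
  -- nonpositivity of αinv on nonpositive arguments
  have hinv_nonpos : ∀ x : ℝ, x ≤ 0 → αinv x ≤ 0 := fun x hx => by
    have := hmono_inv hx; rwa [hinv0] at this
  -- strict monotonicity of F c
  have key : ∀ c : ℝ, 0 ≤ c → StrictMono (fun r => r - αinv (-(ε r * c))) := by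
    intro c hc a b hab
    have h1 : αinv (-(ε b * c)) ≤ αinv (-(ε a * c)) := by
      apply hmono_inv
      have : ε a * c ≤ ε b * c := mul_le_mul_of_nonneg_right (hεmono hab.le) hc
      linarith
    simp only
    linarith
  -- existence of a zero of F c
  have exist : ∀ c : ℝ, 0 ≤ c → ∃ r : ℝ, r - αinv (-(ε r * c)) = 0 := by
    intro c hc
    set F : ℝ → ℝ := fun r => r - αinv (-(ε r * c)) with hF
    have hFcont : Continuous F :=
      continuous_id.sub (hcont_inv.comp ((hεcont.mul continuous_const).neg))
    set m : ℝ := αinv (-(ε 0 * c)) with hm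
    have hm0 : m ≤ 0 := hinv_nonpos _ (by nlinarith [(hεpos 0).le])
    have hFm : F m ≤ 0 := by
      have h1 : αinv (-(ε 0 * c)) ≤ αinv (-(ε m * c)) := by
        apply hmono_inv
        have : ε m * c ≤ ε 0 * c := mul_le_mul_of_nonneg_right (hεmono hm0) hc
        linarith
      simp only [hF]
      linarith
    have hF0 : 0 ≤ F 0 := by
      simp only [hF, zero_sub, neg_nonneg]
      exact hinv_nonpos _ (by nlinarith [(hεpos 0).le])
    have := intermediate_value_Icc hm0 hFcont.continuousOn
    have h0mem : (0 : ℝ) ∈ Set.Icc (F m) (F 0) := ⟨hFm, hF0⟩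
    obtain ⟨r, _, hr⟩ := this h0mem
    exact ⟨r, hr⟩
  have hq : ∀ δ : ℝ, 0 ≤ δ → (0:ℝ) ≤ δ ^ 2 / 4 := fun δ hδ => by positivity
  refine ⟨?_, ?_, ?_⟩
  · intro δ hδ
    obtain ⟨r, hr⟩ := exist _ (hq δ hδ)
    rw [← mul_div_assoc] at hr
    refine ⟨r, hr, fun y hy => (key _ (hq δ hδ)).injective ?_⟩
    simp only [← mul_div_assoc]
    exact hy.trans hr.symm
  · intro δ hδ r hr
    have : r = αinv (-(ε r * δ ^ 2 / 4)) := by linarith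
    rw [this]
    apply hinv_nonpos
    have := (hεpos r).le
    nlinarith
  · intro δ₁ δ₂ r₁ r₂ hδ₁ h12 h1 h2
    have hc : δ₁ ^ 2 / 4 ≤ δ₂ ^ 2 / 4 := by nlinarith
    have hF2r1 : (0:ℝ) ≤ r₁ - αinv (-(ε r₁ * δ₂ ^ 2 / 4)) := by
      have h1' : αinv (-(ε r₁ * δ₂ ^ 2 / 4)) ≤ αinv (-(ε r₁ * δ₁ ^ 2 / 4)) := by
        apply hmono_inv
        have := (hεpos r₁).le
        nlinarith
      linarith
    have := (key _ (hq δ₂ (hδ₁.trans h12))).le_iff_le (a := r₂) (b := r₁)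
    apply this.mp
    show r₂ - αinv (-(ε r₂ * (δ₂ ^ 2 / 4))) ≤ r₁ - αinv (-(ε r₁ * (δ₂ ^ 2 / 4)))
    simp only [← mul_div_assoc]
    linarith
end

section
/- Let f : ℝⁿ → ℝⁿ and g : ℝⁿ → ℝⁿˣᵐ be continuous, h : ℝⁿ → ℝ be continuously differentiable, α be an extended class K∞ function, ε : ℝ → ℝ_{>0} be continuous, and k_n : ℝⁿ → ℝᵐ be continuous. Suppose h is an ISSf-CBF: for all x, sup_{u} [L_f h(x) + L_g h(x) u] > −α(h(x)) + ‖L_g h(x)‖₂²/ε(h(x)). Define η̄(x) = −(L_f h(x) + L_g h(x) k_n(x) + α(h(x)))/‖L_g h(x)‖₂² + 1/ε(h(x)) if L_g h(x) ≠ 0 and η̄(x) = 0 if L_g h(x) = 0, and k̄_QP(x) = k_n(x) + max{0, η̄(x)} L_g h(x)ᵀ. Then (i) for every x ∈ ℝⁿ, k̄_QP(x) ∈ K_ISSf(x), i.e., L_f h(x) + L_g h(x) k̄_QP(x) ≥ −α(h(x)) + ‖L_g h(x)‖₂²/ε(h(x)); (ii) for each x with L_g h(x) ≠ 0, k̄_QP(x)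 is the unique minimizer of ½‖u − k_n(x)‖₂² over K_ISSf(x); and (iii) k̄_QP is continuous. -/
open RealInnerProductSpace

open Classical

set_option maxHeartbeats 1000000 in
/-- the robust QP controller `k̄_QP` (i) satisfies the ISSf constraint
everywhere, (ii) is the unique minimizer of `½‖u − k_n(x)‖²` over `K_ISSf(x)` wherever
`L_g h(x) ≠ 0`, and (iii) is continuous. -/
theorem robust_kQP_properties {n m : ℕ}
    (f : EuclideanSpace ℝ (Fin n) → EuclideanSpace ℝ (Fin n))
    (g : EuclideanSpace ℝ (Fin n) → (EuclideanSpace ℝ (Fin m) →L[ℝ] EuclideanSpace ℝ (Fin n)))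
    (h : EuclideanSpace ℝ (Fin n) → ℝ) (α ε : ℝ → ℝ)
    (hf : Continuous f) (hg : Continuous g) (hh : ContDiff ℝ 1 h) (hα : ClassKInfE α)
    (hεpos : ∀ r : ℝ, 0 < ε r) (hεcont : Continuous ε)
    (kn : EuclideanSpace ℝ (Fin n) → EuclideanSpace ℝ (Fin m)) (hkn : Continuous kn)
    (hissf : ∀ x : EuclideanSpace ℝ (Fin n), ∃ u : EuclideanSpace ℝ (Fin m),
      LieF h f x + LieG h g x u > -α (h x) + ‖LieG h g x‖ ^ 2 / ε (h x))
    (ηbar : EuclideanSpace ℝ (Fin n) → ℝ)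
    (hηbar : ∀ x, ηbar x = if LieG h g x = 0 then 0
      else -(LieF h f x + LieG h g x (kn x) + α (h x)) / ‖LieG h g x‖ ^ 2
        + 1 / ε (h x))
    (kbarQP : EuclideanSpace ℝ (Fin n) → EuclideanSpace ℝ (Fin m))
    (hkbarQP : ∀ x, kbarQP x = kn x + max 0 (ηbar x) •
      (InnerProductSpace.toDual ℝ (EuclideanSpace ℝ (Fin m))).symm (LieG h g x)) :
    (∀ x : EuclideanSpace ℝ (Fin n),
      LieF h f x + LieG h g x (kbarQP x) ≥ -α (h x) + ‖LieG h g x‖ ^ 2 / ε (h x)) ∧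
    (∀ x : EuclideanSpace ℝ (Fin n), LieG h g x ≠ 0 →
      ∀ u : EuclideanSpace ℝ (Fin m),
        LieF h f x + LieG h g x u ≥ -α (h x) + ‖LieG h g x‖ ^ 2 / ε (h x) →
          ‖kbarQP x - kn x‖ ≤ ‖u - kn x‖ ∧
          (‖u - kn x‖ = ‖kbarQP x - kn x‖ → u = kbarQP x)) ∧
    Continuous kbarQP := by

  have hva : ∀ (x : EuclideanSpace ℝ (Fin n)) (u : EuclideanSpace ℝ (Fin m)),
      LieG h g x u = ⟪(InnerProductSpace.toDual ℝ (EuclideanSpace ℝ (Fin m))).symm (LieG h g x), u⟫ := by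
    intro x u
    rw [InnerProductSpace.toDual_symm_apply]
  have hnv : ∀ x : EuclideanSpace ℝ (Fin n),
      ‖(InnerProductSpace.toDual ℝ (EuclideanSpace ℝ (Fin m))).symm (LieG h g x)‖ = ‖LieG h g x‖ :=
    fun x => LinearIsometryEquiv.norm_map _ _
  have havv : ∀ x : EuclideanSpace ℝ (Fin n),
      LieG h g x ((InnerProductSpace.toDual ℝ (EuclideanSpace ℝ (Fin m))).symm (LieG h g x))
        = ‖LieG h g x‖ ^ 2 := by
    intro x
    rw [hva, real_inner_self_eq_norm_sq, hnv]
  have hval : ∀ x : EuclideanSpace ℝ (Fin n), LieG h g x (kbarQP x)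
      = LieG h g x (kn x) + max 0 (ηbar x) * ‖LieG h g x‖ ^ 2 := by
    intro x
    rw [hkbarQP, map_add, map_smul, havv, smul_eq_mul]
  have hηN : ∀ x : EuclideanSpace ℝ (Fin n), LieG h g x ≠ 0 →
      ηbar x * ‖LieG h g x‖ ^ 2
        = -(LieF h f x + LieG h g x (kn x) + α (h x)) + ‖LieG h g x‖ ^ 2 / ε (h x) := by
    intro x ha
    have hna : ‖LieG h g x‖ ≠ 0 := norm_ne_zero_iff.mpr ha
    have hN : (0:ℝ) < ‖LieG h g x‖ ^ 2 := by positivity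
    have hε := hεpos (h x)
    rw [hηbar x, if_neg ha]
    field_simp
  -- Part (i)
  have part1 : ∀ x : EuclideanSpace ℝ (Fin n),
      LieF h f x + LieG h g x (kbarQP x) ≥ -α (h x) + ‖LieG h g x‖ ^ 2 / ε (h x) := by
    intro x
    by_cases ha : LieG h g x = 0
    · obtain ⟨u, hu⟩ := hissf x
      rw [hval x, ha]
      rw [ha] at hu
      simp only [ContinuousLinearMap.zero_apply, norm_zero] at hu ⊢
      norm_num at hu ⊢
      linarith
    · have hna : ‖LieG h g x‖ ≠ 0 := norm_ne_zero_iff.mpr ha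
      have hN : (0:ℝ) < ‖LieG h g x‖ ^ 2 := by positivity
      have hkey := hηN x ha
      rw [hval]
      rcases le_or_gt (ηbar x) 0 with hle | hlt
      · rw [max_eq_left hle]
        have : ηbar x * ‖LieG h g x‖ ^ 2 ≤ 0 := mul_nonpos_of_nonpos_of_nonneg hle hN.le
        linarith
      · rw [max_eq_right hlt.le]
        linarith
  -- Part (ii)
  have part2 : ∀ x : EuclideanSpace ℝ (Fin n), LieG h g x ≠ 0 →
      ∀ u : EuclideanSpace ℝ (Fin m),
        LieF h f x + LieG h g x u ≥ -α (h x) + ‖LieG h g x‖ ^ 2 / ε (h x) →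
          ‖kbarQP x - kn x‖ ≤ ‖u - kn x‖ ∧
          (‖u - kn x‖ = ‖kbarQP x - kn x‖ → u = kbarQP x) := by
    intro x ha u hu
    set v := (InnerProductSpace.toDual ℝ (EuclideanSpace ℝ (Fin m))).symm (LieG h g x) with hv
    have hkb : kbarQP x - kn x = max 0 (ηbar x) • v := by
      rw [hkbarQP]; abel
    rcases le_or_gt (ηbar x) 0 with hle | hlt
    · have ht0 : max 0 (ηbar x) = 0 := max_eq_left hle
      have hkbx : kbarQP x = kn x := by
        have := hkb
        rw [ht0, zero_smul, sub_eq_zero] at this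
        exact this
      constructor
      · rw [hkbx, sub_self, norm_zero]; exact norm_nonneg _
      · intro he
        rw [hkbx, sub_self, norm_zero, norm_eq_zero, sub_eq_zero] at he
        rw [hkbx]; exact he
    · have ht' : max 0 (ηbar x) = ηbar x := max_eq_right hlt.le
      have hkey := hηN x ha
      have heq : LieG h g x (kbarQP x)
          = -α (h x) + ‖LieG h g x‖ ^ 2 / ε (h x) - LieF h f x := by
        rw [hval, ht']
        linarith
      have hip : (0:ℝ) ≤ ⟪v, u - kbarQP x⟫ := by
        have h1 : LieG h g x (u - kbarQP x) ≥ 0 := by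
          rw [map_sub, heq]; linarith
        rw [hva x (u - kbarQP x)] at h1
        exact h1
      have hdecomp : u - kn x = (u - kbarQP x) + (max 0 (ηbar x) • v) := by
        rw [← hkb]; abel
      have hexp : ‖u - kn x‖ ^ 2 = ‖u - kbarQP x‖ ^ 2
          + 2 * ⟪u - kbarQP x, max 0 (ηbar x) • v⟫ + ‖max 0 (ηbar x) • v‖ ^ 2 := by
        rw [hdecomp, @norm_add_sq_real]
      have hip2 : (0:ℝ) ≤ ⟪u - kbarQP x, max 0 (ηbar x) • v⟫ := by
        rw [real_inner_smul_right, real_inner_comm]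
        exact mul_nonneg (le_max_left 0 _) hip
      have hn1 : ‖kbarQP x - kn x‖ ^ 2 ≤ ‖u - kn x‖ ^ 2 := by
        rw [hkb]
        nlinarith [sq_nonneg ‖u - kbarQP x‖]
      constructor
      · nlinarith [norm_nonneg (kbarQP x - kn x), norm_nonneg (u - kn x)]
      · intro he
        have h2 : ‖u - kbarQP x‖ ^ 2 ≤ 0 := by
          rw [he, hkb] at hexp
          nlinarith
        have h3 : ‖u - kbarQP x‖ = 0 := by
          nlinarith [norm_nonneg (u - kbarQP x)]
        exact eq_of_sub_eq_zero (norm_eq_zero.mp h3)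
  -- continuity ingredients
  have hfd : Continuous (fderiv ℝ h) := hh.continuous_fderiv one_ne_zero
  have hLieG : Continuous (fun x => LieG h g x) := hfd.clm_comp hg
  have hLieF : Continuous (fun x => LieF h f x) := hfd.clm_apply hf
  have hvcont : Continuous (fun x =>
      (InnerProductSpace.toDual ℝ (EuclideanSpace ℝ (Fin m))).symm (LieG h g x)) :=
    (LinearIsometryEquiv.continuous _).comp hLieG
  have haknc : Continuous (fun x => LieG h g x (kn x)) := hLieG.clm_apply hkn
  have hScont : Continuous (fun x => LieF h f x + LieG h g x (kn x) + α (h x)) :=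
    (hLieF.add haknc).add (hα.continuous.comp (hh.continuous))
  -- Part (iii)
  have part3 : Continuous kbarQP := by
    have hkfun : kbarQP = fun x => kn x + max 0 (ηbar x) •
        (InnerProductSpace.toDual ℝ (EuclideanSpace ℝ (Fin m))).symm (LieG h g x) :=
      funext hkbarQP
    rw [hkfun]
    refine hkn.add ?_
    rw [continuous_iff_continuousAt]
    intro x₀
    by_cases ha : LieG h g x₀ = 0
    · -- the scaled vector tends to 0
      have hv0 : (InnerProductSpace.toDual ℝ (EuclideanSpace ℝ (Fin m))).symm (LieG h g x₀) = 0 := by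
        rw [ha, map_zero]
      have hη0 : ηbar x₀ = 0 := by rw [hηbar x₀, if_pos ha]
      have htarget : max 0 (ηbar x₀) •
          (InnerProductSpace.toDual ℝ (EuclideanSpace ℝ (Fin m))).symm (LieG h g x₀) = 0 := by
        rw [hv0, smul_zero]
      -- positivity of S at x₀
      have hS0 : 0 < LieF h f x₀ + LieG h g x₀ (kn x₀) + α (h x₀) := by
        obtain ⟨u, hu⟩ := hissf x₀
        rw [ha] at hu
        simp only [ContinuousLinearMap.zero_apply, norm_zero] at hu
        norm_num at hu
        rw [ha]
        simp only [ContinuousLinearMap.zero_apply]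
        linarith
      have hev : ∀ᶠ y in nhds x₀, 0 < LieF h f y + LieG h g y (kn y) + α (h y) :=
        (hScont.tendsto x₀).eventually (eventually_gt_nhds hS0)
      have hbound : ∀ᶠ y in nhds x₀,
          ‖max 0 (ηbar y) • (InnerProductSpace.toDual ℝ (EuclideanSpace ℝ (Fin m))).symm (LieG h g y)‖
            ≤ ‖LieG h g y‖ / ε (h y) := by
        refine hev.mono (fun y hy => ?_)
        rw [norm_smul, hnv]
        have hεy := hεpos (h y)
        by_cases hay : LieG h g y = 0
        · rw [hηbar y, if_pos hay, hay]
          simp [hεy.le]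
        · have hnay : ‖LieG h g y‖ ≠ 0 := norm_ne_zero_iff.mpr hay
          have hNy : (0:ℝ) < ‖LieG h g y‖ ^ 2 := by positivity
          have hηle : ηbar y ≤ 1 / ε (h y) := by
            rw [hηbar y, if_neg hay]
            have : -(LieF h f y + LieG h g y (kn y) + α (h y)) / ‖LieG h g y‖ ^ 2 ≤ 0 :=
              div_nonpos_of_nonpos_of_nonneg (by linarith) hNy.le
            linarith
          have hmax : max 0 (ηbar y) ≤ 1 / ε (h y) :=
            max_le (one_div_nonneg.mpr hεy.le) hηle
          have h1 : ‖max 0 (ηbar y)‖ = max 0 (ηbar y) :=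
            Real.norm_of_nonneg (le_max_left 0 _)
          rw [h1]
          calc max 0 (ηbar y) * ‖LieG h g y‖ ≤ (1 / ε (h y)) * ‖LieG h g y‖ :=
                mul_le_mul_of_nonneg_right hmax (norm_nonneg _)
            _ = ‖LieG h g y‖ / ε (h y) := by ring
      have hlim : Filter.Tendsto (fun y => ‖LieG h g y‖ / ε (h y)) (nhds x₀) (nhds 0) := by
        have : Continuous (fun y => ‖LieG h g y‖ / ε (h y)) :=
          hLieG.norm.div (hεcont.comp (hh.continuous)) (fun y => (hεpos (h y)).ne')
        have h0 : ‖LieG h g x₀‖ / ε (h x₀) = 0 := by rw [ha, norm_zero, zero_div]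
        have hca : Filter.Tendsto (fun y => ‖LieG h g y‖ / ε (h y)) (nhds x₀)
            (nhds (‖LieG h g x₀‖ / ε (h x₀))) := this.continuousAt
        rwa [h0] at hca
      have key := squeeze_zero_norm' hbound hlim
      simpa [ContinuousAt, htarget] using key
    · -- away from zeros, everything is a quotient of continuous functions
      have hopen : IsOpen {y | LieG h g y ≠ 0} :=
        isOpen_compl_iff.mpr (isClosed_singleton.preimage hLieG)
      have hmem : {y | LieG h g y ≠ 0} ∈ nhds x₀ := hopen.mem_nhds ha
      have hηeq : ∀ y ∈ {y | LieG h g y ≠ 0}, ηbar y =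
          -(LieF h f y + LieG h g y (kn y) + α (h y)) / ‖LieG h g y‖ ^ 2 + 1 / ε (h y) := by
        intro y hy
        rw [hηbar y, if_neg hy]
      have hFcont : ContinuousAt (fun y =>
          -(LieF h f y + LieG h g y (kn y) + α (h y)) / ‖LieG h g y‖ ^ 2 + 1 / ε (h y)) x₀ := by
        have hna : ‖LieG h g x₀‖ ≠ 0 := norm_ne_zero_iff.mpr ha
        have hN : ‖LieG h g x₀‖ ^ 2 ≠ 0 := pow_ne_zero 2 hna
        exact ((hScont.neg.continuousAt.div ((hLieG.norm.pow 2).continuousAt) hN).add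
          (continuousAt_const.div ((hεcont.comp hh.continuous).continuousAt) (hεpos (h x₀)).ne'))
      have hηca : ContinuousAt ηbar x₀ := by
        refine hFcont.congr ?_
        exact Filter.eventuallyEq_of_mem hmem (fun y hy => (hηeq y hy).symm)
      exact (continuousAt_const.max hηca).smul hvcont.continuousAt
  exact ⟨part1, part2, part3⟩
end
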